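/- Let k ≥ 3 and c > 0. The equation B = c·f_k(B) has a positive solution B > 0 if and only if c > (k-2)/2, where f_k(B) = 2B·∫_B^∞ ψ_{k-1}(x)·x^{-2} dx. -/

import Mathlib

open MeasureTheory

/-- `psi m x` is the probability that a Poisson random variable with mean `x`
takes a value at least `m`. -/
noncomputable def psi (m : ℕ) (x : ℝ) : ℝ :=
  ∑' t : ℕ, if m ≤ t then x ^ t * Real.exp (-x) / t.factorial else 0

/-- `fk k B = 2 B ∫_B^∞ ψ_{k-1}(x) x⁻² dx`. -/
noncomputable def fk (k : ℕ) (B : ℝ) : ℝ :=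
  2 * B * ∫ x in Set.Ioi B, psi (k - 1) x / x ^ 2

open Set Filter

set_option linter.unnecessarySeqFocus false
set_option linter.unusedTactic false

lemma summable_poisson (x : ℝ) :
    Summable (fun t : ℕ => x ^ t * Real.exp (-x) / t.factorial) := by
  have h := (Real.summable_pow_div_factorial x).mul_right (Real.exp (-x))
  refine h.congr fun t => ?_
  ring

lemma tsum_poisson (x : ℝ) :
    ∑' t : ℕ, x ^ t * Real.exp (-x) / t.factorial = 1 := by
  have h : ∀ t : ℕ, x ^ t * Real.exp (-x) / t.factorial
      = x ^ t / t.factorial * Real.exp (-x) := fun t => by ring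
  rw [tsum_congr h, tsum_mul_right]
  have he : ∑' t : ℕ, x ^ t / (t.factorial : ℝ) = Real.exp x := by
    rw [Real.exp_eq_exp_ℝ, NormedSpace.exp_eq_tsum_div]
  rw [he, ← Real.exp_add]
  simp

lemma psi_eq_tsum (m : ℕ) (x : ℝ) :
    psi m x = ∑' n : ℕ, x ^ (n + m) * Real.exp (-x) / (n + m).factorial := by
  rw [psi]
  have hinj : Function.Injective (fun n : ℕ => n + m) := fun a b h => by simpa using h
  rw [← hinj.tsum_eq ?_]
  · exact tsum_congr fun n => by simp
  · intro t ht
    simp only [Function.mem_support, ne_eq, ite_eq_right_iff, not_forall] at ht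
    obtain ⟨hmt, -⟩ := ht
    exact ⟨t - m, by simp; omega⟩

lemma psi_closed (m : ℕ) (x : ℝ) :
    psi m x = 1 - ∑ t ∈ Finset.range m, x ^ t * Real.exp (-x) / t.factorial := by
  have h := Summable.sum_add_tsum_nat_add (f := fun t : ℕ => x ^ t * Real.exp (-x) / t.factorial)
    m (summable_poisson x)
  rw [tsum_poisson] at h
  rw [psi_eq_tsum]
  linarith

lemma continuous_psi (m : ℕ) : Continuous (psi m) := by
  have h : psi m = fun x => 1 - ∑ t ∈ Finset.range m, x ^ t * Real.exp (-x) / t.factorial :=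
    funext (psi_closed m)
  rw [h]
  continuity

lemma summable_psi_shift (m : ℕ) (x : ℝ) :
    Summable (fun n : ℕ => x ^ (n + m) * Real.exp (-x) / (n + m).factorial) :=
  (summable_poisson x).comp_injective (fun a b h => by simpa using h)

lemma psi_nonneg (m : ℕ) {x : ℝ} (hx : 0 ≤ x) : 0 ≤ psi m x := by
  rw [psi_eq_tsum]
  exact tsum_nonneg fun n => by positivity

lemma psi_pos (m : ℕ) {x : ℝ} (hx : 0 < x) : 0 < psi m x := by
  rw [psi_eq_tsum]
  have h0 : 0 < x ^ (0 + m) * Real.exp (-x) / (0 + m).factorial := by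
    apply div_pos (mul_pos (pow_pos hx _) (Real.exp_pos _))
    exact_mod_cast Nat.factorial_pos _
  exact h0.trans_le (Summable.le_tsum (summable_psi_shift m x) 0 fun n _ => by positivity)

lemma psi_le_one (m : ℕ) {x : ℝ} (hx : 0 ≤ x) : psi m x ≤ 1 := by
  rw [psi_closed]
  have : 0 ≤ ∑ t ∈ Finset.range m, x ^ t * Real.exp (-x) / t.factorial :=
    Finset.sum_nonneg fun t _ => by positivity
  linarith

lemma psi_le_pow (m : ℕ) {x : ℝ} (hx : 0 ≤ x) : psi m x ≤ x ^ m := by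
  rw [psi_eq_tsum]
  have hle : ∀ n : ℕ, x ^ (n + m) * Real.exp (-x) / (n + m).factorial
      ≤ x ^ m * (x ^ n * Real.exp (-x) / n.factorial) := by
    intro n
    have h1 : x ^ (n + m) * Real.exp (-x) / ((n + m).factorial : ℝ)
        ≤ x ^ (n + m) * Real.exp (-x) / (n.factorial : ℝ) := by
      gcongr <;>
        first
          | positivity
          | exact_mod_cast Nat.factorial_pos n
          | exact_mod_cast Nat.factorial_le (Nat.le_add_right n m)
          | omega
    calc x ^ (n + m) * Real.exp (-x) / ((n + m).factorial : ℝ)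
        ≤ x ^ (n + m) * Real.exp (-x) / (n.factorial : ℝ) := h1
      _ = x ^ m * (x ^ n * Real.exp (-x) / n.factorial) := by rw [pow_add]; ring
  calc (∑' n : ℕ, x ^ (n + m) * Real.exp (-x) / (n + m).factorial)
      ≤ ∑' n : ℕ, x ^ m * (x ^ n * Real.exp (-x) / n.factorial) :=
        Summable.tsum_le_tsum hle (summable_psi_shift m x) ((summable_poisson x).mul_left _)
    _ = x ^ m * ∑' n : ℕ, x ^ n * Real.exp (-x) / n.factorial := tsum_mul_left
    _ = x ^ m := by rw [tsum_poisson, mul_one]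

lemma integrableOn_exp_pow (j : ℕ) :
    IntegrableOn (fun x : ℝ => Real.exp (-x) * x ^ j) (Ioi 0) := by
  have h := Real.GammaIntegral_convergent (s := (j : ℝ) + 1) (by positivity)
  refine h.congr_fun (fun x hx => ?_) measurableSet_Ioi
  rw [add_sub_cancel_right]; simp only [Real.rpow_natCast]

lemma integral_exp_pow (j : ℕ) :
    ∫ x in Ioi (0:ℝ), Real.exp (-x) * x ^ j = j.factorial := by
  have h := Real.Gamma_eq_integral (s := (j : ℝ) + 1) (by positivity)
  have h2 : ∀ x ∈ Ioi (0:ℝ), Real.exp (-x) * x ^ (((j:ℝ) + 1) - 1)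
      = Real.exp (-x) * x ^ j := by
    intro x hx
    rw [add_sub_cancel_right, Real.rpow_natCast]
  rw [setIntegral_congr_fun measurableSet_Ioi h2] at h
  rw [← h, Real.Gamma_nat_eq_factorial]

lemma telescope_hasSum {a : ℝ} (ha : 0 < a) :
    HasSum (fun n : ℕ => (a + n)⁻¹ - (a + n + 1)⁻¹) a⁻¹ := by
  set f : ℕ → ℝ := fun n => (a + n)⁻¹ with hf
  have hfn : ∀ n : ℕ, (fun n : ℕ => (a + n)⁻¹ - (a + n + 1)⁻¹) n = f n - f (n + 1) := by
    intro n; simp only [hf]; push_cast; ring_nf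
  have hmono : ∀ n : ℕ, 0 ≤ f n - f (n + 1) := by
    intro n
    have h1 : (0:ℝ) < a + n := by positivity
    have : f (n + 1) ≤ f n := by
      simp only [hf]
      gcongr
      push_cast
      linarith
    linarith
  have hpart : ∀ N, ∑ n ∈ Finset.range N, (f n - f (n + 1)) = f 0 - f N :=
    fun N => Finset.sum_range_sub' f N
  have hfpos : ∀ n : ℕ, 0 ≤ f n := fun n => by positivity
  have hsummable : Summable (fun n => f n - f (n + 1)) :=
    summable_of_sum_range_le (c := f 0) hmono (fun N => by rw [hpart]; linarith [hfpos N])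
  have hlim : Tendsto (fun N : ℕ => f N) atTop (nhds 0) := by
    apply Tendsto.comp tendsto_inv_atTop_zero
    exact tendsto_atTop_add_const_left _ a tendsto_natCast_atTop_atTop
  have htendsto : Tendsto (fun N : ℕ => ∑ n ∈ Finset.range N, (f n - f (n + 1)))
      atTop (nhds a⁻¹) := by
    simp only [hpart]
    have : f 0 = a⁻¹ := by simp [hf]
    simpa [this] using tendsto_const_nhds.sub hlim
  have h := (hsummable.hasSum_iff_tendsto_nat).mpr htendsto
  rwa [funext hfn]

lemma integrableOn_psi_div_sq (m : ℕ) (hm : 2 ≤ m) :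
    IntegrableOn (fun x : ℝ => psi m x / x ^ 2) (Ioi 0) := by
  have hmeas : AEStronglyMeasurable (fun x : ℝ => psi m x / x ^ 2) volume :=
    ((continuous_psi m).measurable.div ((continuous_pow 2).measurable)).aestronglyMeasurable
  have h1 : IntegrableOn (fun x : ℝ => psi m x / x ^ 2) (Ioc (0:ℝ) 1) := by
    apply Measure.integrableOn_of_bounded (M := 1) (by simp)
    · exact hmeas
    · rw [ae_restrict_iff' measurableSet_Ioc]
      filter_upwards with x hx
      have hx0 : 0 < x := hx.1
      have hnn : 0 ≤ psi m x / x ^ 2 := div_nonneg (psi_nonneg m hx0.le) (by positivity)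
      rw [Real.norm_of_nonneg hnn]
      have : psi m x / x ^ 2 ≤ x ^ m / x ^ 2 := by
        gcongr
        exact psi_le_pow m hx0.le
      refine this.trans ?_
      have hpow : x ^ m / x ^ 2 = x ^ (m - 2) := by
        rw [show m = m - 2 + 2 from by omega, pow_add]
        field_simp
        rw [Nat.add_sub_cancel]
      rw [hpow]
      exact pow_le_one₀ hx0.le hx.2
  have h2 : IntegrableOn (fun x : ℝ => psi m x / x ^ 2) (Ioi (1:ℝ)) := by
    have hb : IntegrableOn (fun x : ℝ => x ^ (-2 : ℝ)) (Ioi 1) :=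
      integrableOn_Ioi_rpow_of_lt (by norm_num) one_pos
    apply Integrable.mono' hb
    · exact hmeas.restrict
    · rw [ae_restrict_iff' measurableSet_Ioi]
      filter_upwards with x hx
      have hx0 : (0:ℝ) < x := lt_trans one_pos hx
      have hnn : 0 ≤ psi m x / x ^ 2 := div_nonneg (psi_nonneg m hx0.le) (by positivity)
      rw [Real.norm_of_nonneg hnn]
      have hrw : x ^ (-2 : ℝ) = 1 / x ^ 2 := by
        rw [show (-2:ℝ) = -(2:ℕ) from by norm_num, Real.rpow_neg hx0.le, Real.rpow_natCast,
          one_div]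
      rw [hrw]
      gcongr
      exact psi_le_one m hx0.le
  rw [← Ioc_union_Ioi_eq_Ioi (zero_le_one (α := ℝ))]
  exact h1.union h2

lemma total_integral (m : ℕ) (hm : 2 ≤ m) :
    ∫ x in Ioi (0:ℝ), psi m x / x ^ 2 = ((m:ℝ) - 1)⁻¹ := by
  set G : ℕ → ℝ → ℝ := fun n x => Real.exp (-x) * x ^ (m - 2 + n) / (n + m).factorial with hG
  have hstep : ∀ x ∈ Ioi (0:ℝ), psi m x / x ^ 2 = ∑' n : ℕ, G n x := by
    intro x hx
    have hx0 : (0:ℝ) < x := hx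
    rw [psi_eq_tsum, ← tsum_div_const]
    refine tsum_congr fun n => ?_
    have hxp : x ^ (n + m) = x ^ (m - 2 + n) * x ^ 2 := by
      rw [← pow_add]
      congr 1
      omega
    rw [hG]
    field_simp [hxp]
    have hxm : x ^ m = x ^ (m - 2) * x ^ 2 := by rw [← pow_add]; congr 1; omega
    simp only [hxm, pow_add]; ring
  rw [setIntegral_congr_fun measurableSet_Ioi hstep]
  have hGint : ∀ n, IntegrableOn (G n) (Ioi 0) := by
    intro n
    exact (integrableOn_exp_pow (m - 2 + n)).div_const _
  have hGval : ∀ n, ∫ x in Ioi (0:ℝ), G n x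
      = ((m - 2 + n).factorial : ℝ) / ((n + m).factorial : ℝ) := by
    intro n
    rw [hG]
    simp only
    rw [integral_div, integral_exp_pow]
  have hkey : ∀ n : ℕ, ((m - 2 + n).factorial : ℝ) / ((n + m).factorial : ℝ)
      = ((m:ℝ) - 1 + n)⁻¹ - ((m:ℝ) - 1 + n + 1)⁻¹ := by
    intro n
    have h1 : n + m = (m - 2 + n) + 1 + 1 := by omega
    rw [h1, Nat.factorial_succ, Nat.factorial_succ]
    have ha : ((m - 2 + n : ℕ) : ℝ) = (m:ℝ) - 2 + n := by
      push_cast [Nat.cast_sub hm]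
      ring
    have hfac : (0:ℝ) < ((m - 2 + n).factorial : ℝ) := by exact_mod_cast Nat.factorial_pos _
    push_cast [ha]
    have h2 : (m:ℝ) - 2 + n + 1 = (m:ℝ) - 1 + n := by ring
    have h3 : (0:ℝ) < (m:ℝ) - 1 + n := by
      have : (2:ℝ) ≤ m := by exact_mod_cast hm
      push_cast
      linarith [Nat.cast_nonneg (α := ℝ) n]
    have h4 : (0:ℝ) < (m:ℝ) - 1 + n + 1 := by linarith
    rw [h2]
    field_simp
    ring
  have htel : HasSum (fun n : ℕ => ((m:ℝ) - 1 + n)⁻¹ - ((m:ℝ) - 1 + n + 1)⁻¹) ((m:ℝ) - 1)⁻¹ := by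
    have hm1 : (0:ℝ) < (m:ℝ) - 1 := by
      have : (2:ℝ) ≤ m := by exact_mod_cast hm
      linarith
    exact telescope_hasSum hm1
  have hnorm : ∀ n, ∫ x in Ioi (0:ℝ), ‖G n x‖ = ∫ x in Ioi (0:ℝ), G n x := by
    intro n
    refine setIntegral_congr_fun measurableSet_Ioi fun x hx => ?_
    have hx0 : (0:ℝ) < x := hx
    rw [Real.norm_of_nonneg]
    rw [hG]
    positivity
  have h5 : (fun n => ∫ x in Ioi (0:ℝ), G n x)
      = fun n : ℕ => ((m:ℝ) - 1 + n)⁻¹ - ((m:ℝ) - 1 + n + 1)⁻¹ :=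
    funext fun n => by rw [hGval, hkey]
  have hsummable : Summable (fun n => ∫ x in Ioi (0:ℝ), ‖G n x‖) := by
    have h6 : (fun n => ∫ x in Ioi (0:ℝ), ‖G n x‖)
        = fun n : ℕ => ((m:ℝ) - 1 + n)⁻¹ - ((m:ℝ) - 1 + n + 1)⁻¹ :=
      funext fun n => by rw [hnorm, hGval, hkey]
    rw [h6]
    exact htel.summable
  have hswap := MeasureTheory.hasSum_integral_of_summable_integral_norm
    (μ := volume.restrict (Ioi 0)) hGint hsummable
  rw [h5] at hswap
  exact hswap.unique htel

lemma integral_split (m : ℕ) (hm : 2 ≤ m) {B : ℝ} (hB : 0 ≤ B) :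
    ∫ x in Ioi (0:ℝ), psi m x / x ^ 2
      = (∫ x in Ioc (0:ℝ) B, psi m x / x ^ 2) + ∫ x in Ioi B, psi m x / x ^ 2 := by
  have h1 : IntegrableOn (fun x : ℝ => psi m x / x ^ 2) (Ioc 0 B) :=
    (integrableOn_psi_div_sq m hm).mono_set Ioc_subset_Ioi_self
  have h2 : IntegrableOn (fun x : ℝ => psi m x / x ^ 2) (Ioi B) :=
    (integrableOn_psi_div_sq m hm).mono_set (Ioi_subset_Ioi hB)
  have h := setIntegral_union (Ioc_disjoint_Ioi (le_refl B)) measurableSet_Ioi h1 h2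
  rwa [Ioc_union_Ioi_eq_Ioi hB] at h

lemma integral_Ioc_pos (m : ℕ) (hm : 2 ≤ m) {B : ℝ} (hB : 0 < B) :
    0 < ∫ x in Ioc (0:ℝ) B, psi m x / x ^ 2 := by
  rw [← intervalIntegral.integral_of_le hB.le]
  apply intervalIntegral.intervalIntegral_pos_of_pos_on
  · rw [intervalIntegrable_iff_integrableOn_Ioc_of_le hB.le]
    exact (integrableOn_psi_div_sq m hm).mono_set Ioc_subset_Ioi_self
  · intro x hx
    exact div_pos (psi_pos m hx.1) (pow_pos hx.1 2)
  · exact hB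

lemma integral_tail_le (m : ℕ) (hm : 2 ≤ m) {M : ℝ} (hM : 0 < M) :
    ∫ x in Ioi M, psi m x / x ^ 2 ≤ M⁻¹ := by
  have hb : IntegrableOn (fun x : ℝ => x ^ (-2 : ℝ)) (Ioi M) :=
    integrableOn_Ioi_rpow_of_lt (by norm_num) hM
  have h1 : ∫ x in Ioi M, psi m x / x ^ 2 ≤ ∫ x in Ioi M, x ^ (-2 : ℝ) := by
    apply setIntegral_mono_on
    · exact (integrableOn_psi_div_sq m hm).mono_set (Ioi_subset_Ioi hM.le)
    · exact hb
    · exact measurableSet_Ioi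
    · intro x hx
      have hx0 : (0:ℝ) < x := lt_trans hM hx
      have hrw : x ^ (-2 : ℝ) = 1 / x ^ 2 := by
        rw [show (-2:ℝ) = -(2:ℕ) from by norm_num, Real.rpow_neg hx0.le, Real.rpow_natCast,
          one_div]
      rw [hrw]
      gcongr
      exact psi_le_one m hx0.le
  have h2 : ∫ x in Ioi M, x ^ (-2 : ℝ) = M⁻¹ := by
    rw [integral_Ioi_rpow_of_lt (by norm_num) hM]
    norm_num
    rw [Real.rpow_neg_one]
  linarith

theorem exists_pos_fixed_point_iff (k : ℕ) (hk : 3 ≤ k) (c : ℝ) (hc : 0 < c) :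
    (∃ B : ℝ, 0 < B ∧ B = c * fk k B) ↔ ((k : ℝ) - 2) / 2 < c := by
  set m := k - 1 with hmdef
  have hm : 2 ≤ m := by omega
  have hcast : ((m:ℝ) - 1) = (k:ℝ) - 2 := by
    rw [hmdef]
    push_cast [Nat.cast_sub (by omega : 1 ≤ k)]
    ring
  have hk2 : (0:ℝ) < (k:ℝ) - 2 := by
    have : (3:ℝ) ≤ k := by exact_mod_cast hk
    linarith
  have h2c : (0:ℝ) < 2 * c := by linarith
  have htot : ∫ x in Ioi (0:ℝ), psi m x / x ^ 2 = ((k:ℝ) - 2)⁻¹ := by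
    rw [total_integral m hm, hcast]
  constructor
  · rintro ⟨B, hB, hfix⟩
    have hI := integral_split m hm hB.le
    set I := ∫ x in Ioi B, psi m x / x ^ 2 with hIdef
    have hfk : fk k B = 2 * B * I := rfl
    have h1 : B * (2 * c * I) = B * 1 := by
      rw [mul_one]
      nth_rewrite 2 [hfix]
      rw [hfk]; ring
    have h2 : 2 * c * I = 1 := mul_left_cancel₀ (ne_of_gt hB) h1
    have hpos := integral_Ioc_pos m hm hB
    have hIlt : I < ((k:ℝ) - 2)⁻¹ := by rw [← htot]; linarith
    have hIval : I = (2 * c)⁻¹ := by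
      field_simp
      linarith
    rw [hIval] at hIlt
    have := (inv_lt_inv₀ h2c hk2).mp hIlt
    linarith
  · intro hclt
    have hlt : (k:ℝ) - 2 < 2 * c := by linarith
    set M := 2 * c + 1 with hMdef
    have hM0 : (0:ℝ) < M := by rw [hMdef]; linarith
    have hIntIcc : IntegrableOn (fun x : ℝ => psi m x / x ^ 2) (Icc 0 M) := by
      rw [integrableOn_Icc_iff_integrableOn_Ioc]
      exact (integrableOn_psi_div_sq m hm).mono_set Ioc_subset_Ioi_self
    set φ : ℝ → ℝ :=
      fun B => ((k:ℝ) - 2)⁻¹ - ∫ x in Ioc (0:ℝ) B, psi m x / x ^ 2 with hphi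
    have hφcont : ContinuousOn φ (Icc 0 M) :=
      continuousOn_const.sub (intervalIntegral.continuousOn_primitive hIntIcc)
    have hφ0 : φ 0 = ((k:ℝ) - 2)⁻¹ := by simp [hphi]
    have hφtail : ∀ B ∈ Icc (0:ℝ) M, φ B = ∫ x in Ioi B, psi m x / x ^ 2 := by
      intro B hB
      rw [hphi]
      simp only
      rw [← htot, integral_split m hm hB.1]
      ring
    have hlt2 : (2 * c)⁻¹ < ((k:ℝ) - 2)⁻¹ := inv_strictAnti₀ hk2 hlt
    have hφM : φ M < (2 * c)⁻¹ := by
      rw [hφtail M (right_mem_Icc.mpr hM0.le)]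
      have h1 := integral_tail_le m hm hM0
      have h2 : M⁻¹ < (2 * c)⁻¹ := inv_strictAnti₀ h2c (by rw [hMdef]; linarith)
      linarith
    have hmem : (2 * c)⁻¹ ∈ Icc (φ M) (φ 0) := by
      constructor
      · exact hφM.le
      · rw [hφ0]; exact hlt2.le
    obtain ⟨B, hBmem, hBval⟩ := intermediate_value_Icc' hM0.le hφcont hmem
    have hBpos : 0 < B := by
      rcases eq_or_lt_of_le hBmem.1 with h | h
      · exfalso
        rw [← h, hφ0] at hBval
        exact absurd hBval.symm (ne_of_lt hlt2)
      · exact h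
    refine ⟨B, hBpos, ?_⟩
    have hIB : ∫ x in Ioi B, psi m x / x ^ 2 = (2 * c)⁻¹ := by
      rw [← hφtail B hBmem, hBval]
    show B = c * (2 * B * ∫ x in Ioi B, psi m x / x ^ 2)
    rw [hIB]
    field_simp
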